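/- Let P and U be multisets of real numbers with U a sub-multiset of P, card P = n and card U = m (so m ≤ n). Then for every k with 1 ≤ k ≤ m, the order statistics satisfy P_(k) ≤ U_(k) ≤ P_(k + (n − m)). In particular, removing at most f elements from a multiset can shift each order statistic by at most f index positions. -/

import Mathlib

/-- The k-th smallest element (1-indexed, counted with multiplicity) of a
multiset of real numbers. -/
noncomputable def nth (S : Multiset ℝ) (k : ℕ) : ℝ :=
  (S.sort (· ≤ ·)).getD (k - 1) 0

/-- The smallest element of a (nonempty) multiset of reals. -/
noncomputable def mmin (S : Multiset ℝ) : ℝ := nth S 1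

/-- The largest element of a (nonempty) multiset of reals. -/
noncomputable def mmax (S : Multiset ℝ) : ℝ := nth S S.card

/-- The diameter of a (nonempty) multiset of reals. -/
noncomputable def mdiam (S : Multiset ℝ) : ℝ := mmax S - mmin S

private lemma aux_gap {m n : ℕ} (f : Fin m ↪o Fin n) :
    ∀ (b : ℕ) (hb : b < m) (a : ℕ) (ha : a ≤ b),
      (f ⟨a, lt_of_le_of_lt ha hb⟩ : ℕ) + (b - a) ≤ f ⟨b, hb⟩ := by
  intro b
  induction b with
  | zero => intro hb a ha; interval_cases a; simp
  | succ b ih =>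
    intro hb a ha
    rcases Nat.lt_or_ge a (b + 1) with h | h
    · have hab : a ≤ b := Nat.lt_succ_iff.mp h
      have h1 := ih (lt_trans (Nat.lt_succ_self b) hb) a hab
      have h2 : (f ⟨b, lt_trans (Nat.lt_succ_self b) hb⟩ : ℕ) < f ⟨b + 1, hb⟩ := by
        exact_mod_cast f.strictMono (by simp [Fin.lt_def])
      omega
    · have : a = b + 1 := le_antisymm ha h
      subst this; simp

theorem stmt11 (n m : ℕ) (P U : Multiset ℝ)
    (hU : U ≤ P) (hP : Multiset.card P = n) (hUm : Multiset.card U = m) :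
    ∀ k : ℕ, 1 ≤ k → k ≤ m → nth P k ≤ nth U k ∧ nth U k ≤ nth P (k + (n - m)) := by
  intro k hk1 hkm
  have hmn : m ≤ n := by
    rw [← hP, ← hUm]; exact Multiset.card_le_card hU
  set l := U.sort (· ≤ ·) with hl
  set L := P.sort (· ≤ ·) with hL
  have hll : l.length = m := by simp [hl, hUm]
  have hLL : L.length = n := by simp [hL, hP]
  have hsl : l.Pairwise (· ≤ ·) := Multiset.pairwise_sort _ _
  have hsL : L.Pairwise (· ≤ ·) := Multiset.pairwise_sort _ _
  have hsub : List.Sublist l L := by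
    apply List.sublist_of_subperm_of_pairwise _ hsl hsL
    rw [← Multiset.coe_le, hl, hL, Multiset.sort_eq, Multiset.sort_eq]
    exact hU
  obtain ⟨f, hf⟩ := List.sublist_iff_exists_fin_orderEmbedding_get_eq.mp hsub
  have hk1' : k - 1 < l.length := by omega
  have hkn : k - 1 + (n - m) < L.length := by omega
  have hfv := hf ⟨k - 1, hk1'⟩
  have hlow : (k : ℕ) - 1 ≤ (f ⟨k - 1, hk1'⟩ : ℕ) := by
    have := aux_gap f (k - 1) hk1' 0 (Nat.zero_le _)
    omega
  have hhigh : (f ⟨k - 1, hk1'⟩ : ℕ) ≤ k - 1 + (n - m) := by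
    have h1 := aux_gap f (l.length - 1) (by omega) (k - 1) (by omega)
    have h2 : (f ⟨l.length - 1, by omega⟩ : ℕ) < L.length := (f _).isLt
    omega
  have e1 : nth U k = l.get ⟨k - 1, hk1'⟩ := by
    simp only [nth, ← hl]
    rw [List.getD_eq_getElem _ _ hk1', List.get_eq_getElem]
  have e2 : nth P k = L.get ⟨k - 1, by omega⟩ := by
    simp only [nth, ← hL]
    rw [List.getD_eq_getElem _ _ (show k - 1 < L.length by omega), List.get_eq_getElem]
  have e3 : nth P (k + (n - m)) = L.get ⟨k - 1 + (n - m), hkn⟩ := by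
    have : k + (n - m) - 1 = k - 1 + (n - m) := by omega
    simp only [nth, ← hL, this]
    rw [List.getD_eq_getElem _ _ hkn, List.get_eq_getElem]
  constructor
  · rw [e1, e2, hfv]
    exact hsL.rel_get_of_le (by simpa [Fin.le_def] using hlow)
  · rw [e1, e3, hfv]
    exact hsL.rel_get_of_le (by simpa [Fin.le_def] using hhigh)
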